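/- Let k = ℓ = 1 (so p = 1). Suppose u, v : J → ℂ solve the transformed system (S') on an open interval J ⊆ (−1,1), that |u(y)| = |v(y)| ≠ 0 for all y ∈ J, and that θ : J → ℝ is a continuous function with conj(u(y))·v(y) = |u(y)|·|v(y)|·exp(i·θ(y)) for all y ∈ J. Then |v| and θ are continuously differentiable on J and satisfy (d/dy)|v(y)| = 2·|v(y)|³·sin(θ(y))·(1−y²)^(−3/2) and θ'(y) = 8·|v(y)|²·cos(θ(y))·(1−y²)^(−3/2) for all y ∈ J. -/

import Mathlib

open Set Complex Filter Topology

/-- `Q(y) = |u(y)|² (1+y)⁻¹ + |v(y)|² (1-y)⁻¹` (case `p = 1`). -/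
noncomputable def Qfun (u v : ℝ → ℂ) (y : ℝ) : ℝ :=
  ‖u y‖ ^ 2 * (1 + y)⁻¹ + ‖v y‖ ^ 2 * (1 - y)⁻¹

/-- `r(y) = u(y) conj(v(y)) + conj(u(y)) v(y)`. -/
noncomputable def rfun (u v : ℝ → ℂ) (y : ℝ) : ℂ :=
  u y * (starRingEnd ℂ) (v y) + (starRingEnd ℂ) (u y) * v y

/-- `(u, v)` solves the transformed system (S') with `k = ℓ = 1` (so `p = 1`) on `J`:
`u, v` are continuously differentiable on `J` and for all `y ∈ J`,
`i (1+y)^{1/2} u' = Q v (1-y)^{-1/2} + r (1-y²)^{-1/2} u (1+y)^{-1/2}` and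
`-i (1-y)^{1/2} v' = Q u (1+y)^{-1/2} + r (1-y²)^{-1/2} v (1-y)^{-1/2}`. -/
def SolvesS'11 (u v : ℝ → ℂ) (J : Set ℝ) : Prop :=
  ContDiffOn ℝ 1 u J ∧ ContDiffOn ℝ 1 v J ∧
  ∀ y ∈ J,
    Complex.I * (((1 + y) ^ ((1 / 2 : ℝ)) : ℝ) : ℂ) * deriv u y
      = ((Qfun u v y : ℝ) : ℂ) * v y * (((1 - y) ^ (-(1 / 2) : ℝ) : ℝ) : ℂ)
        + rfun u v y * (((1 - y ^ 2) ^ (-(1 / 2) : ℝ) : ℝ) : ℂ) * u y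
          * (((1 + y) ^ (-(1 / 2) : ℝ) : ℝ) : ℂ) ∧
    -Complex.I * (((1 - y) ^ ((1 / 2 : ℝ)) : ℝ) : ℂ) * deriv v y
      = ((Qfun u v y : ℝ) : ℂ) * u y * (((1 + y) ^ (-(1 / 2) : ℝ) : ℝ) : ℂ)
        + rfun u v y * (((1 - y ^ 2) ^ (-(1 / 2) : ℝ) : ℝ) : ℂ) * v y
          * (((1 - y) ^ (-(1 / 2) : ℝ) : ℝ) : ℂ)

/-- for `k = ℓ = 1`, along a solution of (S') with `|u| = |v| ≠ 0`
and continuous relative phase `θ` (i.e. `conj(u) v = |u||v| e^{iθ}`), the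
modulus and phase satisfy `(|v|)' = 2|v|³ sin θ (1-y²)^{-3/2}` and
`θ' = 8|v|² cos θ (1-y²)^{-3/2}`. -/
theorem reduced_modulus_phase_system (u v : ℝ → ℂ) (a b : ℝ)
    (hab : Ioo a b ⊆ Ioo (-1 : ℝ) 1)
    (hS : SolvesS'11 u v (Ioo a b))
    (heq : ∀ y ∈ Ioo a b, ‖u y‖ = ‖v y‖)
    (hne : ∀ y ∈ Ioo a b, v y ≠ 0)
    (θ : ℝ → ℝ) (hθc : ContinuousOn θ (Ioo a b))
    (hθ : ∀ y ∈ Ioo a b,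
      (starRingEnd ℂ) (u y) * v y
        = ((‖u y‖ * ‖v y‖ : ℝ) : ℂ) * Complex.exp (Complex.I * θ y)) :
    ∀ y ∈ Ioo a b,
      HasDerivAt (fun s => ‖v s‖)
        (2 * ‖v y‖ ^ 3 * Real.sin (θ y) * (1 - y ^ 2) ^ (-(3 / 2) : ℝ)) y ∧
      HasDerivAt θ
        (8 * ‖v y‖ ^ 2 * Real.cos (θ y) * (1 - y ^ 2) ^ (-(3 / 2) : ℝ)) y := by
  obtain ⟨hCu, hCv, hsys⟩ := hS
  intro y hy
  obtain ⟨hy1, hy2⟩ := hab hy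
  have hA : (0:ℝ) < 1 + y := by linarith
  have hB : (0:ℝ) < 1 - y := by linarith
  have hAB : (0:ℝ) < 1 - y^2 := by nlinarith
  have hJ : Ioo a b ∈ 𝓝 y := isOpen_Ioo.mem_nhds hy
  have hdu : HasDerivAt u (deriv u y) y :=
    ((hCu.contDiffAt hJ).differentiableAt one_ne_zero).hasDerivAt
  have hdv : HasDerivAt v (deriv v y) y :=
    ((hCv.contDiffAt hJ).differentiableAt one_ne_zero).hasDerivAt
  obtain ⟨e1, e2⟩ := hsys y hy
  set R : ℝ := ‖v y‖ with hRdef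
  have hR : 0 < R := norm_pos_iff.mpr (hne y hy)
  set s : ℝ := Real.sin (θ y) with hsdef
  set c : ℝ := Real.cos (θ y) with hcdef
  set ai : ℝ := (1 + y) ^ (-(1/2) : ℝ) with haidef
  set bi : ℝ := (1 - y) ^ (-(1/2) : ℝ) with hbidef
  set sA : ℝ := (1 + y) ^ ((1/2 : ℝ)) with hsAdef
  set sB : ℝ := (1 - y) ^ ((1/2 : ℝ)) with hsBdef
  set sD : ℝ := (1 - y^2) ^ (-(3/2) : ℝ) with hsDdef
  -- real power identities
  have hA2 : ai ^ 2 = (1 + y)⁻¹ := by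
    rw [haidef, ← Real.rpow_natCast ((1+y) ^ (-(1/2):ℝ)) 2, ← Real.rpow_mul hA.le]
    norm_num [Real.rpow_neg_one]
  have hB2 : bi ^ 2 = (1 - y)⁻¹ := by
    rw [hbidef, ← Real.rpow_natCast ((1-y) ^ (-(1/2):ℝ)) 2, ← Real.rpow_mul hB.le]
    norm_num [Real.rpow_neg_one]
  have hA1 : sA * ai = 1 := by
    rw [hsAdef, haidef, ← Real.rpow_add hA]; norm_num
  have hB1 : sB * bi = 1 := by
    rw [hsBdef, hbidef, ← Real.rpow_add hB]; norm_num
  have hCi : (1 - y^2) ^ (-(1/2) : ℝ) = ai * bi := by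
    rw [haidef, hbidef, show (1:ℝ) - y^2 = (1+y)*(1-y) by ring, Real.mul_rpow hA.le hB.le]
  have hsd : sD = ai^3 * bi^3 := by
    rw [hsDdef, show (-(3/2):ℝ) = (-(1/2)) * ((3:ℕ):ℝ) by norm_num, Real.rpow_mul hAB.le,
      hCi, Real.rpow_natCast, mul_pow]
  have hquad : ai^2 + bi^2 = 2 * ai^2 * bi^2 := by
    rw [hA2, hB2]; field_simp; ring
  have hai : 0 < ai := Real.rpow_pos_of_pos hA _
  have hbi : 0 < bi := Real.rpow_pos_of_pos hB _
  -- basic complex facts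
  have hE : Complex.exp (Complex.I * (θ y : ℝ)) = (c:ℂ) + (s:ℂ) * Complex.I := by
    rw [mul_comm, Complex.exp_mul_I, hcdef, hsdef, Complex.ofReal_cos, Complex.ofReal_sin]
  have hUV1 : (starRingEnd ℂ) (u y) * v y = ((R^2 : ℝ):ℂ) * ((c:ℂ) + (s:ℂ) * Complex.I) := by
    rw [hθ y hy, heq y hy, hE]; push_cast; ring
  have hUV2 : u y * (starRingEnd ℂ) (v y) = ((R^2 : ℝ):ℂ) * ((c:ℂ) - (s:ℂ) * Complex.I) := by
    have h1 := congrArg (starRingEnd ℂ) hUV1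
    simp only [map_mul, map_add, Complex.conj_conj, Complex.conj_I, Complex.conj_ofReal] at h1
    linear_combination h1
  have hUU : (starRingEnd ℂ) (u y) * u y = ((R^2 : ℝ):ℂ) := by
    rw [mul_comm, Complex.mul_conj, Complex.normSq_eq_norm_sq, heq y hy]
  have hVcV : (starRingEnd ℂ) (v y) * v y = ((R^2 : ℝ):ℂ) := by
    rw [mul_comm, Complex.mul_conj, Complex.normSq_eq_norm_sq]
  have hVV2 : v y * (starRingEnd ℂ) (v y) = ((R^2 : ℝ):ℂ) := by
    rw [mul_comm]; exact hVcV
  have hrr : rfun u v y = ((2 * R^2 * c : ℝ) : ℂ) := by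
    rw [rfun, hUV1, hUV2]; push_cast; ring
  have hQ : Qfun u v y = R^2 * ai^2 + R^2 * bi^2 := by
    rw [Qfun, heq y hy, hA2, hB2, hRdef]
  -- rewrite the system
  rw [hQ, hrr, hCi] at e1 e2
  push_cast at e1 e2
  have hA1C : ((sA:ℝ):ℂ) * ((ai:ℝ):ℂ) = 1 := by exact_mod_cast hA1
  have hB1C : ((sB:ℝ):ℂ) * ((bi:ℝ):ℂ) = 1 := by exact_mod_cast hB1
  have hquadC : ((ai:ℝ):ℂ)^2 + ((bi:ℝ):ℂ)^2 = 2 * ((ai:ℝ):ℂ)^2 * ((bi:ℝ):ℂ)^2 := by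
    exact_mod_cast hquad
  have hscC : ((s:ℝ):ℂ)^2 + ((c:ℝ):ℂ)^2 = 1 := by
    have := Real.sin_sq_add_cos_sq (θ y); rw [← hsdef, ← hcdef] at this; exact_mod_cast this
  -- explicit derivatives
  have hv' : deriv v y = Complex.I * (bi:ℂ) *
      (((R:ℂ)^2 * (ai:ℂ)^2 + (R:ℂ)^2 * (bi:ℂ)^2) * u y * (ai:ℂ)
        + (2 * (R:ℂ)^2 * (c:ℂ)) * ((ai:ℂ) * (bi:ℂ)) * v y * (bi:ℂ)) := by
    linear_combination (Complex.I * (bi:ℂ)) * e2 - (deriv v y) * hB1C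
      + ((bi:ℂ) * (sB:ℂ) * deriv v y) * Complex.I_sq
  have hu' : deriv u y = -Complex.I * (ai:ℂ) *
      (((R:ℂ)^2 * (ai:ℂ)^2 + (R:ℂ)^2 * (bi:ℂ)^2) * v y * (bi:ℂ)
        + (2 * (R:ℂ)^2 * (c:ℂ)) * ((ai:ℂ) * (bi:ℂ)) * u y * (ai:ℂ)) := by
    linear_combination (-Complex.I * (ai:ℂ)) * e1 - (deriv u y) * hA1C
      + ((ai:ℂ) * (sA:ℂ) * deriv u y) * Complex.I_sq
  have hv'c : (starRingEnd ℂ) (deriv v y) = -Complex.I * (bi:ℂ) *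
      (((R:ℂ)^2 * (ai:ℂ)^2 + (R:ℂ)^2 * (bi:ℂ)^2) * (starRingEnd ℂ) (u y) * (ai:ℂ)
        + (2 * (R:ℂ)^2 * (c:ℂ)) * ((ai:ℂ) * (bi:ℂ)) * (starRingEnd ℂ) (v y) * (bi:ℂ)) := by
    rw [hv']
    simp only [map_mul, map_add, Complex.conj_I, Complex.conj_ofReal, map_pow, map_ofNat]
    all_goals ring
  have hu'c : (starRingEnd ℂ) (deriv u y) = Complex.I * (ai:ℂ) *
      (((R:ℂ)^2 * (ai:ℂ)^2 + (R:ℂ)^2 * (bi:ℂ)^2) * (starRingEnd ℂ) (v y) * (bi:ℂ)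
        + (2 * (R:ℂ)^2 * (c:ℂ)) * ((ai:ℂ) * (bi:ℂ)) * (starRingEnd ℂ) (u y) * (ai:ℂ)) := by
    rw [hu']
    simp only [map_mul, map_add, map_neg, Complex.conj_I, Complex.conj_ofReal, map_pow,
      map_ofNat]
    all_goals ring
  have hdcu : HasDerivAt (fun t => (starRingEnd ℂ) (u t)) ((starRingEnd ℂ) (deriv u y)) y := by
    have := Complex.conjCLE.toContinuousLinearMap.hasFDerivAt.comp_hasDerivAt y hdu
    exact this
  have hdcv : HasDerivAt (fun t => (starRingEnd ℂ) (v t)) ((starRingEnd ℂ) (deriv v y)) y := by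
    have := Complex.conjCLE.toContinuousLinearMap.hasFDerivAt.comp_hasDerivAt y hdv
    exact this
  have hUV1' := hUV1
  have hUV2' := hUV2
  have hVcV' := hVcV
  have hUU' := hUU
  push_cast at hUV1' hUV2' hVcV' hUU'
  -- PART 1 : modulus
  have hZ : deriv v y * (starRingEnd ℂ) (v y) + v y * (starRingEnd ℂ) (deriv v y)
      = ((4 * R^4 * s * sD : ℝ) : ℂ) := by
    rw [hsd, hv'c, hv']
    push_cast
    linear_combination
      (Complex.I * (bi:ℂ) * ((R:ℂ)^2*(ai:ℂ)^2+(R:ℂ)^2*(bi:ℂ)^2) * (ai:ℂ)) * hUV2'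
      - (Complex.I * (bi:ℂ) * ((R:ℂ)^2*(ai:ℂ)^2+(R:ℂ)^2*(bi:ℂ)^2) * (ai:ℂ)) * hUV1'
      - (2 * (bi:ℂ) * ((R:ℂ)^2*(ai:ℂ)^2+(R:ℂ)^2*(bi:ℂ)^2) * (ai:ℂ) * (R:ℂ)^2 * (s:ℂ)) * Complex.I_sq
      + (2 * (s:ℂ) * (R:ℂ)^4 * (ai:ℂ) * (bi:ℂ)) * hquadC
  have hN : HasDerivAt (fun t => v t * (starRingEnd ℂ) (v t)) (((4 * R^4 * s * sD : ℝ) : ℂ)) y := by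
    have h0 := hdv.mul hdcv; rwa [hZ] at h0
  have hre : HasDerivAt (fun t => (v t * (starRingEnd ℂ) (v t)).re) (4 * R^4 * s * sD) y := by
    have := Complex.reCLM.hasFDerivAt.comp_hasDerivAt y hN
    simpa only [Function.comp_def, Complex.reCLM_apply, Complex.ofReal_re] using this
  have hNy : (v y * (starRingEnd ℂ) (v y)).re = R^2 := by rw [hVV2, Complex.ofReal_re]
  have hsq0 : (v y * (starRingEnd ℂ) (v y)).re ≠ 0 := by rw [hNy]; positivity
  have part1 : HasDerivAt (fun t => ‖v t‖) (2 * R^3 * s * sD) y := by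
    have h6 := (Real.hasDerivAt_sqrt hsq0).comp y hre
    have h5 : HasDerivAt (fun t => Real.sqrt ((v t * (starRingEnd ℂ) (v t)).re))
        (2 * R^3 * s * sD) y := by
      refine h6.congr_deriv ?_
      rw [hNy, Real.sqrt_sq hR.le]
      field_simp
      ring
    have hfun : (fun t => Real.sqrt ((v t * (starRingEnd ℂ) (v t)).re))
        = fun t => ‖v t‖ := by
      funext t
      rw [Complex.mul_conj, Complex.ofReal_re, ← Complex.norm_def]
    rw [← hfun]
    exact h5
  -- PART 2 : phase
  have hW : (starRingEnd ℂ) (deriv u y) * v y + (starRingEnd ℂ) (u y) * deriv v y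
      = (((4*R^2*s*sD : ℝ):ℂ) + ((8*R^2*c*sD : ℝ):ℂ) * Complex.I) * ((R^2:ℝ):ℂ)
        * Complex.exp (Complex.I * (θ y : ℝ)) := by
    rw [hsd, hu'c, hv', hE]
    push_cast
    linear_combination
      (Complex.I * (ai:ℂ) * ((R:ℂ)^2*(ai:ℂ)^2+(R:ℂ)^2*(bi:ℂ)^2) * (bi:ℂ)) * hVcV'
      + (Complex.I * (bi:ℂ) * ((R:ℂ)^2*(ai:ℂ)^2+(R:ℂ)^2*(bi:ℂ)^2) * (ai:ℂ)) * hUU'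
      + (Complex.I * (2*(R:ℂ)^2*(c:ℂ)) * ((ai:ℂ)*(bi:ℂ)) * ((ai:ℂ)^2+(bi:ℂ)^2)) * hUV1'
      + (2*Complex.I*(ai:ℂ)*(bi:ℂ)*(R:ℂ)^4
          + Complex.I*(2*(R:ℂ)^2*(c:ℂ))*(ai:ℂ)*(bi:ℂ)*(R:ℂ)^2*((c:ℂ)+(s:ℂ)*Complex.I)) * hquadC
      + (-(4*(R:ℂ)^4*(ai:ℂ)^3*(bi:ℂ)^3*(c:ℂ)*(s:ℂ))) * Complex.I_sq
      + (-(4*(R:ℂ)^4*(ai:ℂ)^3*(bi:ℂ)^3)*Complex.I) * hscC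
  have hexp : Complex.exp (Complex.I * (θ y : ℝ)) * Complex.exp (-(Complex.I * (θ y : ℝ))) = 1 := by
    rw [← Complex.exp_add]; simp
  have hR2ne : ((R^2 : ℝ):ℂ) ≠ 0 := by
    simp only [ne_eq, Complex.ofReal_eq_zero]; positivity
  have hgy : (starRingEnd ℂ) (u y) * v y * Complex.exp (-(Complex.I * (θ y : ℝ))) = ((R^2:ℝ):ℂ) := by
    rw [hθ y hy, heq y hy]
    push_cast
    linear_combination ((R:ℂ) * (R:ℂ)) * hexp
  have hg : HasDerivAt (fun t => (starRingEnd ℂ) (u t) * v t * Complex.exp (-(Complex.I * (θ y : ℝ))))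
      (((starRingEnd ℂ) (deriv u y) * v y + (starRingEnd ℂ) (u y) * deriv v y)
        * Complex.exp (-(Complex.I * (θ y : ℝ)))) y := (hdcu.mul hdv).mul_const _
  have hslit : (starRingEnd ℂ) (u y) * v y * Complex.exp (-(Complex.I * (θ y : ℝ)))
      ∈ Complex.slitPlane := by
    rw [hgy]; exact Complex.ofReal_mem_slitPlane.mpr (by positivity)
  have hclog := hg.clog_real hslit
  beta_reduce at hclog
  rw [hgy] at hclog
  have hval : ((starRingEnd ℂ) (deriv u y) * v y + (starRingEnd ℂ) (u y) * deriv v y)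
      * Complex.exp (-(Complex.I * (θ y : ℝ))) / ((R^2:ℝ):ℂ)
      = ((4*R^2*s*sD : ℝ):ℂ) + ((8*R^2*c*sD : ℝ):ℂ) * Complex.I := by
    rw [hW, div_eq_iff hR2ne]
    linear_combination ((((4*R^2*s*sD : ℝ):ℂ) + ((8*R^2*c*sD : ℝ):ℂ) * Complex.I) * ((R^2:ℝ):ℂ)) * hexp
  rw [hval] at hclog
  have him' : HasDerivAt (fun t => (Complex.log ((starRingEnd ℂ) (u t) * v t
      * Complex.exp (-(Complex.I * (θ y : ℝ))))).im) (8*R^2*c*sD) y := by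
    have := Complex.imCLM.hasFDerivAt.comp_hasDerivAt y hclog
    simpa only [Function.comp_def, Complex.imCLM_apply, Complex.add_im, Complex.mul_im,
      Complex.ofReal_im, Complex.ofReal_re, Complex.I_im, Complex.I_re, mul_zero, mul_one,
      zero_mul, add_zero, zero_add] using this
  have hfull := him'.add_const (θ y)
  have hπ : ∀ᶠ t in 𝓝 y, θ t ∈ Ioo (θ y - Real.pi) (θ y + Real.pi) :=
    (hθc.continuousAt hJ) (Ioo_mem_nhds (by linarith [Real.pi_pos]) (by linarith [Real.pi_pos]))
  have hev : θ =ᶠ[𝓝 y] fun t => (Complex.log ((starRingEnd ℂ) (u t) * v t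
      * Complex.exp (-(Complex.I * (θ y : ℝ))))).im + θ y := by
    filter_upwards [hπ, hJ] with t ht1 ht2
    have hρ : 0 < ‖u t‖ * ‖v t‖ := by
      have h7 := hne t ht2
      have h8 : 0 < ‖v t‖ := norm_pos_iff.mpr h7
      rw [heq t ht2]; positivity
    rw [hθ t ht2, Complex.log_im, mul_assoc,
      show Complex.exp (Complex.I * (θ t : ℝ)) * Complex.exp (-(Complex.I * (θ y : ℝ)))
        = Complex.exp (((θ t - θ y : ℝ):ℂ) * Complex.I) from by
          rw [← Complex.exp_add]; congr 1; push_cast; ring,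
      Complex.arg_real_mul _ hρ, Complex.exp_mul_I,
      Complex.arg_cos_add_sin_mul_I ⟨by simp only [mem_Ioo] at ht1; linarith,
        by simp only [mem_Ioo] at ht1; linarith⟩]
    ring
  have part2 : HasDerivAt θ (8*R^2*c*sD) y := hfull.congr_of_eventuallyEq hev
  exact ⟨part1, part2⟩
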